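/- Let D be a PID and suppose A₁₁ (r×r, nonsingular), A₁₂ (r×k), A₂₁ (p×r) are matrices over D[x] such that A₂₁·A₁₁⁻¹·A₁₂, computed over the fraction field, has all entries in D[x]. If the block matrix (A₁₁ A₁₂) is minor left prime, then A₂₁·A₁₁⁻¹ has all entries in D[x]. -/

import Mathlib

/-- if (A₁₁ A₁₂) is minor left prime and A₂₁·A₁₁⁻¹·A₁₂ is
polynomial, then A₂₁·A₁₁⁻¹ is polynomial. Computations take place over
the fraction field of D[x]. -/
theorem stmt_6 (D : Type*) [CommRing D] [IsDomain D] [IsPrincipalIdealRing D]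
    (r k p : ℕ)
    (A11 : Matrix (Fin r) (Fin r) (Polynomial D))
    (A12 : Matrix (Fin r) (Fin k) (Polynomial D))
    (A21 : Matrix (Fin p) (Fin r) (Polynomial D))
    (hns : A11.det ≠ 0)
    (hMLP : ∀ d : Polynomial D,
      (∀ g : Fin r → Fin r ⊕ Fin k, Function.Injective g →
        d ∣ ((Matrix.fromCols A11 A12).submatrix id g).det)
      → IsUnit d)
    (hent : ∃ M : Matrix (Fin p) (Fin k) (Polynomial D),
      A21.map (algebraMap (Polynomial D) (FractionRing (Polynomial D))) *
        (A11.map (algebraMap (Polynomial D) (FractionRing (Polynomial D))))⁻¹ *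
        A12.map (algebraMap (Polynomial D) (FractionRing (Polynomial D))) =
      M.map (algebraMap (Polynomial D) (FractionRing (Polynomial D)))) :
    ∃ M : Matrix (Fin p) (Fin r) (Polynomial D),
      A21.map (algebraMap (Polynomial D) (FractionRing (Polynomial D))) *
        (A11.map (algebraMap (Polynomial D) (FractionRing (Polynomial D))))⁻¹ =
      M.map (algebraMap (Polynomial D) (FractionRing (Polynomial D))) := by
  obtain ⟨M, hM⟩ := hent
  set φ : Polynomial D →+* FractionRing (Polynomial D) :=
    (algebraMap (Polynomial D) (FractionRing (Polynomial D))) with hφ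
  have hφinj : Function.Injective φ :=
    IsFractionRing.injective (Polynomial D) (FractionRing (Polynomial D))
  set X : Matrix (Fin p) (Fin r) (FractionRing (Polynomial D)) :=
    A21.map φ * (A11.map φ)⁻¹ with hX
  have hdetmap : ∀ {n : ℕ} (C : Matrix (Fin n) (Fin n) (Polynomial D)),
      (C.map φ).det = φ C.det := by
    intro n C
    rw [RingHom.map_det, RingHom.mapMatrix_apply]
  have hadjmap : ∀ {n : ℕ} (C : Matrix (Fin n) (Fin n) (Polynomial D)),
      (C.map φ).adjugate = C.adjugate.map φ := by
    intro n C
    exact (RingHom.map_adjugate φ C).symm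
  have hdet : IsUnit (A11.map φ).det := by
    rw [hdetmap]
    exact isUnit_iff_ne_zero.mpr (fun h => hns (hφinj (by rw [h, map_zero])))
  have hXA : X * A11.map φ = A21.map φ := by
    rw [hX, Matrix.mul_assoc, Matrix.nonsing_inv_mul _ hdet, Matrix.mul_one]
  have hXB : X * A12.map φ = M.map φ := hM
  have key : ∀ g : Fin r → Fin r ⊕ Fin k,
      ∀ i j, φ ((Matrix.fromCols A11 A12).submatrix id g).det * X i j
        = φ ((((Matrix.fromCols A21 M).submatrix id g) *
            ((Matrix.fromCols A11 A12).submatrix id g).adjugate) i j) := by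
    intro g i j
    set C : Matrix (Fin r) (Fin r) (Polynomial D) :=
      (Matrix.fromCols A11 A12).submatrix id g with hC
    set N : Matrix (Fin p) (Fin r) (Polynomial D) :=
      (Matrix.fromCols A21 M).submatrix id g with hN
    have h1 : X * (Matrix.fromCols A11 A12).map φ
        = (Matrix.fromCols A21 M).map φ := by
      ext i' j'
      rcases j' with j' | j'
      · have := congrFun (congrFun hXA i') j'
        simpa [Matrix.mul_apply, Matrix.fromCols, Matrix.map_apply] using this
      · have := congrFun (congrFun hXB i') j'
        simpa [Matrix.mul_apply, Matrix.fromCols, Matrix.map_apply] using this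
    have h2 : X * C.map φ = N.map φ := by
      ext i' j'
      have := congrFun (congrFun h1 i') (g j')
      simpa [Matrix.mul_apply, hC, hN, Matrix.submatrix, Matrix.map_apply] using this
    have h3 : X * (C.map φ * (C.map φ).adjugate) = N.map φ * (C.map φ).adjugate := by
      rw [← Matrix.mul_assoc, h2]
    rw [Matrix.mul_adjugate, hadjmap, ← Matrix.map_mul, hdetmap] at h3
    have := congrFun (congrFun h3 i) j
    simpa [Matrix.smul_apply, Matrix.map_apply, smul_eq_mul] using this
  have hrange : ∀ i j, ∃ m : Polynomial D, φ m = X i j := by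
    intro i j
    obtain ⟨⟨a, b⟩, hx⟩ := IsLocalization.mk'_surjective (nonZeroDivisors (Polynomial D)) (X i j)
    dsimp only at hx
    rw [IsFractionRing.mk'_eq_div] at hx
    have hb0 : (b : Polynomial D) ≠ 0 := nonZeroDivisors.coe_ne_zero b
    obtain ⟨a', b', c', hcop, ha', hb'⟩ :=
      UniqueFactorizationMonoid.exists_reduced_factors' a (b : Polynomial D) hb0
    have hc0 : c' ≠ 0 := fun h => hb0 (by rw [← hb', h, zero_mul])
    have hb'0 : b' ≠ 0 := fun h => hb0 (by rw [← hb', h, mul_zero])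
    have hφb' : φ b' ≠ 0 := fun h => hb'0 (hφinj (by rw [h, map_zero]))
    have hx' : X i j = φ a' / φ b' := by
      rw [← hx, ← ha', ← hb', map_mul, map_mul]
      rw [mul_div_mul_left]
      exact fun h => hc0 (by simpa using h)
    have hdvd : ∀ g : Fin r → Fin r ⊕ Fin k, Function.Injective g →
        b' ∣ ((Matrix.fromCols A11 A12).submatrix id g).det := by
      intro g _
      have h := key g i j
      rw [hx'] at h
      have h2 : φ (((Matrix.fromCols A11 A12).submatrix id g).det * a')
          = φ ((((Matrix.fromCols A21 M).submatrix id g) *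
              ((Matrix.fromCols A11 A12).submatrix id g).adjugate) i j * b') := by
        rw [map_mul, map_mul]
        field_simp at h ⊢
        linear_combination h
      have h3 := hφinj h2
      have hdd : b' ∣ ((Matrix.fromCols A11 A12).submatrix id g).det * a' :=
        ⟨_, by rw [h3, mul_comm]⟩
      exact hcop.symm.dvd_of_dvd_mul_right hdd
    have hub' : IsUnit b' := hMLP b' hdvd
    obtain ⟨u, rfl⟩ := hub'
    refine ⟨a' * ↑u⁻¹, ?_⟩
    rw [hx', eq_div_iff hφb', ← map_mul]
    congr 1
    rw [mul_assoc]
    simp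
  choose Mf hMf using hrange
  exact ⟨Matrix.of Mf, by ext i j; exact (hMf i j).symm⟩
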